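/- Let Z > 0 and H > 0. Each interval ((k − 1/2)π/Z, (k + 1/2)π/Z) with k ≥ 1 integer not containing H contains exactly one positive solution β of tan(βZ) = 2Hβ/(β² − H²). -/

import Mathlib

open Real

open Filter Set Topology

theorem stmt_17 (Z H : ℝ) (hZ : 0 < Z) (hH : 0 < H) (k : ℤ) (hk : 1 ≤ k)
    (hHnot : H ∉ Set.Ioo (((k : ℝ) - 1/2) * π / Z) (((k : ℝ) + 1/2) * π / Z)) :
    ∃! β : ℝ, β ∈ Set.Ioo (((k : ℝ) - 1/2) * π / Z) (((k : ℝ) + 1/2) * π / Z) ∧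
      0 < β ∧ Real.tan (β * Z) = 2 * H * β / (β ^ 2 - H ^ 2) := by
  have hπ := Real.pi_pos
  have hk1 : (1:ℝ) ≤ (k:ℝ) := by exact_mod_cast hk
  set a := ((k : ℝ) - 1/2) * π / Z with ha
  set b := ((k : ℝ) + 1/2) * π / Z with hb
  have ha0 : 0 < a := by
    apply div_pos _ hZ; nlinarith
  have hab : a < b := by
    rw [ha, hb, div_lt_div_iff₀ hZ hZ]; nlinarith [mul_pos hπ hZ]
  have hb0 : 0 < b := ha0.trans hab
  have haZ : a * Z = ((k:ℝ) - 1/2) * π := by rw [ha]; field_simp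
  have hbZ : b * Z = ((k:ℝ) + 1/2) * π := by rw [hb]; field_simp
  have hmem : ∀ β ∈ Set.Ioo a b, β * Z - (k:ℝ) * π ∈ Set.Ioo (-(π/2)) (π/2) := by
    intro β hβ
    have h1 := mul_lt_mul_of_pos_right hβ.1 hZ
    have h2 := mul_lt_mul_of_pos_right hβ.2 hZ
    rw [haZ] at h1; rw [hbZ] at h2
    constructor <;> [linarith; linarith]
  have htan_eq : ∀ β : ℝ, Real.tan (β * Z) = Real.tan (β * Z - (k:ℝ) * π) :=
    fun β => (Real.tan_sub_int_mul_pi (β * Z) k).symm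
  have hside : (∀ β ∈ Set.Ioo a b, 0 < β ^ 2 - H ^ 2) ∨
      (∀ β ∈ Set.Ioo a b, β ^ 2 - H ^ 2 < 0) := by
    rcases le_or_gt H a with h | h
    · left; intro β hβ; nlinarith [hβ.1]
    · right; intro β hβ
      have hbH : b ≤ H := by
        by_contra hc; push_neg at hc; exact hHnot ⟨h, hc⟩
      have hβ0 : 0 < β := lt_trans ha0 hβ.1
      nlinarith [hβ.2]
  have hne : ∀ β ∈ Set.Ioo a b, β ^ 2 - H ^ 2 ≠ 0 := by
    intro β hβ
    rcases hside with hs | hs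
    · exact ne_of_gt (hs β hβ)
    · exact ne_of_lt (hs β hβ)
  set F : ℝ → ℝ := fun β => Real.tan (β * Z) - 2 * H * β / (β ^ 2 - H ^ 2) with hF
  -- strict monotonicity of F
  have hmono : StrictMonoOn F (Set.Ioo a b) := by
    intro x hx y hy hxy
    have hx0 : 0 < x := lt_trans ha0 hx.1
    have hy0 : 0 < y := lt_trans ha0 hy.1
    have ht : Real.tan (x * Z) < Real.tan (y * Z) := by
      rw [htan_eq x, htan_eq y]
      exact Real.strictMonoOn_tan (hmem x hx) (hmem y hy)
        (by have := mul_lt_mul_of_pos_right hxy hZ; linarith)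
    have hxyH : (0:ℝ) < (y - x) * (x * y + H ^ 2) :=
      mul_pos (sub_pos.2 hxy) (by nlinarith)
    have hg : 2 * H * y / (y ^ 2 - H ^ 2) < 2 * H * x / (x ^ 2 - H ^ 2) := by
      rcases hside with hs | hs
      · rw [div_lt_div_iff₀ (hs y hy) (hs x hx)]
        nlinarith [mul_pos hH hxyH]
      · have hxn := hs x hx
        have hyn := hs y hy
        rw [show 2 * H * y / (y ^ 2 - H ^ 2) = -(2 * H * y) / -(y ^ 2 - H ^ 2) by
              rw [neg_div_neg_eq],
            show 2 * H * x / (x ^ 2 - H ^ 2) = -(2 * H * x) / -(x ^ 2 - H ^ 2) by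
              rw [neg_div_neg_eq],
            div_lt_div_iff₀ (by linarith) (by linarith)]
        nlinarith [mul_pos hH hxyH]
    simp only [hF]
    linarith
  -- continuity of F
  have hcont : ContinuousOn F (Set.Ioo a b) := by
    intro β hβ
    apply ContinuousAt.continuousWithinAt
    have hcos : Real.cos (β * Z) ≠ 0 := by
      have hpos := Real.cos_pos_of_mem_Ioo (hmem β hβ)
      rw [Real.cos_sub_int_mul_pi] at hpos
      intro h0
      rw [h0, mul_zero] at hpos
      exact lt_irrefl 0 hpos
    have h1 : ContinuousAt (fun β : ℝ => Real.tan (β * Z)) β := by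
      have hm : ContinuousAt (fun β : ℝ => β * Z) β := by fun_prop
      exact ContinuousAt.comp (g := Real.tan) (f := fun β : ℝ => β * Z)
        (Real.continuousAt_tan.mpr hcos) hm
    have h2 : ContinuousAt (fun β : ℝ => 2 * H * β / (β ^ 2 - H ^ 2)) β :=
      ContinuousAt.div (by fun_prop) (by fun_prop) (hne β hβ)
    exact h1.sub h2
  -- tan tendsto at the endpoints
  have htan_bot : Tendsto (fun β : ℝ => Real.tan (β * Z)) (𝓝[>] a) atBot := by
    have h1 : Tendsto (fun β : ℝ => β * Z - (k:ℝ) * π) (𝓝[>] a) (𝓝[>] (-(π/2))) := by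
      rw [tendsto_nhdsWithin_iff]
      constructor
      · have hc : ContinuousAt (fun β : ℝ => β * Z - (k:ℝ) * π) a := by fun_prop
        have h2 := hc.tendsto.mono_left (nhdsWithin_le_nhds (s := Set.Ioi a))
        convert h2 using 2
        rw [haZ]; ring
      · filter_upwards [self_mem_nhdsWithin] with β hβ
        have h3 := mul_lt_mul_of_pos_right (Set.mem_Ioi.mp hβ) hZ
        rw [haZ] at h3
        simp only [Set.mem_Ioi]
        linarith
    exact (Real.tendsto_tan_neg_pi_div_two.comp h1).congr
      (fun β => Real.tan_sub_int_mul_pi (β * Z) k)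
  have htan_top : Tendsto (fun β : ℝ => Real.tan (β * Z)) (𝓝[<] b) atTop := by
    have h1 : Tendsto (fun β : ℝ => β * Z - (k:ℝ) * π) (𝓝[<] b) (𝓝[<] (π/2)) := by
      rw [tendsto_nhdsWithin_iff]
      constructor
      · have hc : ContinuousAt (fun β : ℝ => β * Z - (k:ℝ) * π) b := by fun_prop
        have h2 := hc.tendsto.mono_left (nhdsWithin_le_nhds (s := Set.Iio b))
        convert h2 using 2
        rw [hbZ]; ring
      · filter_upwards [self_mem_nhdsWithin] with β hβ
        have h3 := mul_lt_mul_of_pos_right (Set.mem_Iio.mp hβ) hZ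
        rw [hbZ] at h3
        simp only [Set.mem_Iio]
        linarith
    exact (Real.tendsto_tan_pi_div_two.comp h1).congr
      (fun β => Real.tan_sub_int_mul_pi (β * Z) k)
  -- F tends to -∞ at the left endpoint
  have hFbot : Tendsto F (𝓝[>] a) atBot := by
    by_cases hHa : H = a
    · have h1 : Tendsto (fun β : ℝ => 2 * H * β / (β + H)) (𝓝[>] a) (𝓝 H) := by
        have hc : ContinuousAt (fun β : ℝ => 2 * H * β / (β + H)) a :=
          ContinuousAt.div (by fun_prop) (by fun_prop)
            (ne_of_gt (by linarith : (0:ℝ) < a + H))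
        have hval : 2 * H * a / (a + H) = H := by
          rw [← hHa]
          field_simp
          ring
        have ht := hc.tendsto.mono_left (nhdsWithin_le_nhds (s := Set.Ioi a))
        rw [hval] at ht
        exact ht
      have h2 : Tendsto (fun β : ℝ => (β - H)⁻¹) (𝓝[>] a) atTop := by
        apply tendsto_inv_nhdsGT_zero.comp
        rw [tendsto_nhdsWithin_iff]
        constructor
        · have hc : ContinuousAt (fun β : ℝ => β - H) a := by fun_prop
          have h3 := hc.tendsto.mono_left (nhdsWithin_le_nhds (s := Set.Ioi a))
          convert h3 using 2
          rw [hHa]; ring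
        · filter_upwards [self_mem_nhdsWithin] with β hβ
          simp only [Set.mem_Ioi] at *
          have : H < β := by rw [hHa]; exact hβ
          linarith
      have hg : Tendsto (fun β : ℝ => 2 * H * β / (β ^ 2 - H ^ 2)) (𝓝[>] a) atTop := by
        refine (h1.pos_mul_atTop hH h2).congr' ?_
        filter_upwards [self_mem_nhdsWithin] with β hβ
        simp only [Set.mem_Ioi] at hβ
        have hβH : H < β := by rw [hHa]; exact hβ
        have hn1 : β + H ≠ 0 := by intro h0; linarith
        have hn2 : β - H ≠ 0 := by intro h0; linarith
        rw [← div_eq_mul_inv, div_div]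
        ring
      have hneg : Tendsto (fun β : ℝ => -(2 * H * β / (β ^ 2 - H ^ 2))) (𝓝[>] a) atBot :=
        tendsto_neg_atBot_iff.mpr hg
      exact (Filter.Tendsto.atBot_add_atBot htan_bot hneg).congr (fun β => by simp only [hF]; ring)
    · have hane : a ^ 2 - H ^ 2 ≠ 0 := by
        have h1 : a - H ≠ 0 := sub_ne_zero.2 (fun h => hHa h.symm)
        have h2 : a + H ≠ 0 := ne_of_gt (by linarith)
        intro h0
        apply mul_ne_zero h1 h2
        linear_combination h0
      have hg : Tendsto (fun β : ℝ => 2 * H * β / (β ^ 2 - H ^ 2)) (𝓝[>] a)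
          (𝓝 (2 * H * a / (a ^ 2 - H ^ 2))) := by
        have hc : ContinuousAt (fun β : ℝ => 2 * H * β / (β ^ 2 - H ^ 2)) a :=
          ContinuousAt.div (by fun_prop) (by fun_prop) hane
        exact hc.tendsto.mono_left (nhdsWithin_le_nhds (s := Set.Ioi a))
      exact ((hg.neg).add_atBot htan_bot).congr (fun β => by simp only [hF]; ring)
  -- F tends to +∞ at the right endpoint
  have hFtop : Tendsto F (𝓝[<] b) atTop := by
    by_cases hHb : H = b
    · have h1 : Tendsto (fun β : ℝ => 2 * H * β / (β + H)) (𝓝[<] b) (𝓝 H) := by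
        have hc : ContinuousAt (fun β : ℝ => 2 * H * β / (β + H)) b :=
          ContinuousAt.div (by fun_prop) (by fun_prop)
            (ne_of_gt (by linarith : (0:ℝ) < b + H))
        have hval : 2 * H * b / (b + H) = H := by
          rw [← hHb]
          field_simp
          ring
        have ht := hc.tendsto.mono_left (nhdsWithin_le_nhds (s := Set.Iio b))
        rw [hval] at ht
        exact ht
      have h2 : Tendsto (fun β : ℝ => (β - H)⁻¹) (𝓝[<] b) atBot := by
        have h3 : Tendsto (fun β : ℝ => (H - β)⁻¹) (𝓝[<] b) atTop := by
          apply tendsto_inv_nhdsGT_zero.comp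
          rw [tendsto_nhdsWithin_iff]
          constructor
          · have hc : ContinuousAt (fun β : ℝ => H - β) b := by fun_prop
            have h4 := hc.tendsto.mono_left (nhdsWithin_le_nhds (s := Set.Iio b))
            convert h4 using 2
            rw [hHb]; ring
          · filter_upwards [self_mem_nhdsWithin] with β hβ
            simp only [Set.mem_Iio] at hβ
            simp only [Set.mem_Ioi]
            have : β < H := by rw [hHb]; exact hβ
            linarith
        have h5 := tendsto_neg_atTop_atBot.comp h3
        refine h5.congr (fun β => ?_)
        simp only [Function.comp]
        rw [← inv_neg, neg_sub]
      have hg : Tendsto (fun β : ℝ => 2 * H * β / (β ^ 2 - H ^ 2)) (𝓝[<] b) atBot := by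
        refine (h1.pos_mul_atBot hH h2).congr' ?_
        filter_upwards [Ioo_mem_nhdsLT hb0] with β hβ
        have hβ0 : 0 < β := hβ.1
        have hβH : β < H := by rw [hHb]; exact hβ.2
        have hn1 : β + H ≠ 0 := by intro h0; linarith
        have hn2 : β - H ≠ 0 := by intro h0; linarith
        rw [← div_eq_mul_inv, div_div]
        ring
      have hneg : Tendsto (fun β : ℝ => -(2 * H * β / (β ^ 2 - H ^ 2))) (𝓝[<] b) atTop :=
        tendsto_neg_atTop_iff.mpr hg
      exact (Filter.Tendsto.atTop_add_atTop htan_top hneg).congr (fun β => by simp only [hF]; ring)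
    · have hbne : b ^ 2 - H ^ 2 ≠ 0 := by
        have h1 : b - H ≠ 0 := sub_ne_zero.2 (fun h => hHb h.symm)
        have h2 : b + H ≠ 0 := ne_of_gt (by linarith)
        intro h0
        apply mul_ne_zero h1 h2
        linear_combination h0
      have hg : Tendsto (fun β : ℝ => 2 * H * β / (β ^ 2 - H ^ 2)) (𝓝[<] b)
          (𝓝 (2 * H * b / (b ^ 2 - H ^ 2))) := by
        have hc : ContinuousAt (fun β : ℝ => 2 * H * β / (β ^ 2 - H ^ 2)) b :=
          ContinuousAt.div (by fun_prop) (by fun_prop) hbne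
        exact hc.tendsto.mono_left (nhdsWithin_le_nhds (s := Set.Iio b))
      exact ((hg.neg).add_atTop htan_top).congr (fun β => by simp only [hF]; ring)
  -- pick a point where F is negative, and one where it is positive
  have hmemIoi : ∀ᶠ x in 𝓝[>] a, x ∈ Set.Ioo a b := Ioo_mem_nhdsGT hab
  have hmemIio : ∀ᶠ x in 𝓝[<] b, x ∈ Set.Ioo a b := Ioo_mem_nhdsLT hab
  obtain ⟨β₁, hFβ₁, hβ₁⟩ :=
    ((hFbot.eventually (eventually_lt_atBot (0:ℝ))).and hmemIoi).exists
  obtain ⟨β₂, hFβ₂, hβ₂⟩ :=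
    ((hFtop.eventually (eventually_gt_atTop (0:ℝ))).and hmemIio).exists
  have h12 : β₁ < β₂ := by
    rcases lt_trichotomy β₁ β₂ with h | h | h
    · exact h
    · rw [h] at hFβ₁; linarith
    · have := hmono hβ₂ hβ₁ h; linarith
  have hsub : Set.Icc β₁ β₂ ⊆ Set.Ioo a b := fun x hx =>
    ⟨lt_of_lt_of_le hβ₁.1 hx.1, lt_of_le_of_lt hx.2 hβ₂.2⟩
  obtain ⟨β₀, hβ₀Icc, hFβ₀⟩ :=
    intermediate_value_Icc h12.le (hcont.mono hsub) ⟨hFβ₁.le, hFβ₂.le⟩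
  have hβ₀ : β₀ ∈ Set.Ioo a b := hsub hβ₀Icc
  refine ⟨β₀, ⟨hβ₀, ha0.trans hβ₀.1, ?_⟩, ?_⟩
  · have h0 : F β₀ = 0 := hFβ₀
    simp only [hF] at h0
    exact sub_eq_zero.mp h0
  · rintro β' ⟨hβ'mem, hβ'pos, heq'⟩
    refine hmono.injOn hβ'mem hβ₀ ?_
    rw [hFβ₀]
    simp only [hF]
    rw [heq']
    ring
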